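/- Let θ be a primitive substitution of constant length λ ≥ 2 over a finite alphabet A with θ(a₀)_0 = a₀ for some a₀ ∈ A, and suppose c(θ) = h(θ). Then for every continuous f : X_θ → ℂ, every x ∈ X_θ and every bounded function u : ℕ → ℂ that is aperiodic (no multiplicativity assumed), lim_{N→∞} (1/N) Σ_{1 ≤ n ≤ N} f(S^n x)·u(n) = 0. -/

import Mathlib

open Filter Topology

/-- `substIter θ l k a j` is the `j`-th letter of `θ^k(a)`, where `θ : A → A^l` is a
substitution of constant length `l` (the letters of `θ(a)` being `θ a 0, …, θ a (l-1)`).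
It is meaningful for `j < l ^ k` and satisfies
`θ^{k+1}(a)_{j'·l + r} = θ(θ^k(a)_{j'})_r`. -/
def substIter {A : Type*} (θ : A → ℕ → A) (l : ℕ) : ℕ → A → ℕ → A
  | 0, a, _ => a
  | k + 1, a, j => θ (substIter θ l k a (j / l)) (j % l)

/-- A substitution of constant length `l` is primitive if some iterate of every letter
contains every letter. -/
def SubstPrimitive {A : Type*} (θ : A → ℕ → A) (l : ℕ) : Prop :=
  ∃ k, 1 ≤ k ∧ ∀ a b : A, ∃ j, j < l ^ k ∧ substIter θ l k a j = b

/-- Primitivity of a substitution restricted to a sub-alphabet `S`. -/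
def SubstPrimitiveOn {A : Type*} (θ : A → ℕ → A) (l : ℕ) (S : Set A) : Prop :=
  ∃ k, 1 ≤ k ∧ ∀ a ∈ S, ∀ b ∈ S, ∃ j, j < l ^ k ∧ substIter θ l k a j = b

/-- The column number of a substitution of constant length `l`, restricted to the
sub-alphabet `S`: the minimal cardinality of a column set `{θ^k(a)_j : a ∈ S}`. -/
noncomputable def columnNumberOn {A : Type*} (θ : A → ℕ → A) (l : ℕ) (S : Set A) : ℕ :=
  sInf { n : ℕ | ∃ k, 1 ≤ k ∧ ∃ j, j < l ^ k ∧
    ((fun a => substIter θ l k a j) '' S).ncard = n }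

/-- The column number `c(θ)` of a substitution of constant length `l`. -/
noncomputable def columnNumber {A : Type*} (θ : A → ℕ → A) (l : ℕ) : ℕ :=
  columnNumberOn θ l Set.univ

/-- The one-sided fixed point `u` of `θ` obtained by iterating `θ` at a letter `a₀`
with `θ(a₀)_0 = a₀`: `u n = θ^k(a₀)_n` for any `k` with `n < l^k`. -/
def substFixedPoint {A : Type*} (θ : A → ℕ → A) (l : ℕ) (a₀ : A) : ℕ → A :=
  fun n => substIter θ l (n + 1) a₀ n

/-- The height `h(θ)`: the largest `m ≥ 1` coprime to `l` dividing
`gcd {r ≥ 1 : u[r] = u[0]}`, i.e. dividing every return time of `u[0]`. -/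
noncomputable def substHeight {A : Type*} (θ : A → ℕ → A) (l : ℕ) (a₀ : A) : ℕ :=
  sSup { m : ℕ | 1 ≤ m ∧ Nat.Coprime m l ∧
    ∀ r : ℕ, 1 ≤ r → substFixedPoint θ l a₀ r = substFixedPoint θ l a₀ 0 → m ∣ r }

/-- The subshift `X_θ ⊆ A^ℤ`: all `x` each of whose finite blocks occurs in some
`θ^k(a)`. -/
def subshift {A : Type*} (θ : A → ℕ → A) (l : ℕ) : Set (ℤ → A) :=
  { x | ∀ (i : ℤ) (n : ℕ), ∃ k, 1 ≤ k ∧ ∃ a : A, ∃ j : ℕ, j + n ≤ l ^ k ∧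
      ∀ m : ℕ, m < n → x (i + (m : ℤ)) = substIter θ l k a (j + m) }

/-- The subshift `X_x ⊆ A^ℤ` generated by a one-sided sequence `x ∈ A^ℕ`: all `z`
each of whose finite blocks occurs in `x`. -/
def subshiftOf {A : Type*} (x : ℕ → A) : Set (ℤ → A) :=
  { z | ∀ (i : ℤ) (n : ℕ), ∃ j : ℕ, ∀ m : ℕ, m < n → z (i + (m : ℤ)) = x (j + m) }

/-- The left shift on `A^ℤ`. -/
def shift {A : Type*} (x : ℤ → A) : ℤ → A := fun n => x (n + 1)

/-- A bounded arithmetic function. -/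
def BoundedSeq (u : ℕ → ℂ) : Prop := ∃ C : ℝ, ∀ n, ‖u n‖ ≤ C

/-- A multiplicative arithmetic function: `u(mn) = u(m)u(n)` for coprime `m, n`. -/
def MultiplicativeSeq (u : ℕ → ℂ) : Prop :=
  ∀ m n : ℕ, Nat.Coprime m n → u (m * n) = u m * u n

/-- An aperiodic arithmetic function: zero mean along every arithmetic progression. -/
def AperiodicSeq (u : ℕ → ℂ) : Prop :=
  ∀ a b : ℕ, 1 ≤ a →
    Tendsto (fun N : ℕ => (N : ℂ)⁻¹ * ∑ n ∈ Finset.Icc 1 N, u (a * n + b)) atTop (nhds 0)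

/-- The Weyl pseudo-metric
`d_W(x,y) = limsup_N sup_{ℓ ≥ 1} (1/N)·#{ℓ ≤ n < ℓ+N : x n ≠ y n}`. -/
noncomputable def weylDist {B : Type*} (x y : ℕ → B) : ℝ :=
  limsup (fun N : ℕ =>
    ⨆ ℓ : ℕ, ⨆ _ : 1 ≤ ℓ,
      (({ n : ℕ | ℓ ≤ n ∧ n < ℓ + N ∧ x n ≠ y n }.ncard : ℝ) / N)) atTop

/-- A periodic sequence. -/
def IsPeriodicSeq {B : Type*} (v : ℕ → B) : Prop :=
  ∃ p, 1 ≤ p ∧ ∀ n, v (n + p) = v n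

/-- Weyl rational almost periodicity: a `d_W`-limit of periodic sequences. -/
def WRAPSeq {B : Type*} (x : ℕ → B) : Prop :=
  ∀ ε : ℝ, 0 < ε → ∃ v : ℕ → B, IsPeriodicSeq v ∧ weylDist x v < ε

/-- The family `𝒳(θ)` of column sets realizing the column number of `θ`. -/
noncomputable def columnSets {A : Type*} (θ : A → ℕ → A) (l : ℕ) : Set (Set A) :=
  { M | (∃ k, 1 ≤ k ∧ ∃ j, j < l ^ k ∧ M = (fun a => substIter θ l k a j) '' Set.univ) ∧
        M.ncard = columnNumber θ l }

/-- The synchronizing part `~θ` of `θ`, as a substitution on subsets of the alphabet: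
`~θ(M)_j = {θ(a)_j : a ∈ M}`. -/
def synchPart {A : Type*} (θ : A → ℕ → A) : Set A → ℕ → Set A :=
  fun M j => (fun a => θ a j) '' M

/-- The joining `θ ∨ ζ` of two substitutions of the same constant length. -/
def joinSub {A B : Type*} (θ : A → ℕ → A) (ζ : B → ℕ → B) : A × B → ℕ → A × B :=
  fun p j => (θ p.1 j, ζ p.2 j)

/-- The pure base `θ^{(h)}` of `θ`: a substitution of length `l` on blocks of length `h`,
`θ^{(h)}(w)_j = θ(w)[jh, (j+1)h−1]`, where `θ(w)` is the concatenation
`θ(w_0)…θ(w_{h-1})`. -/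
def pureBase {A : Type*} (θ : A → ℕ → A) (l h : ℕ) : (Fin h → A) → ℕ → (Fin h → A) :=
  fun w j i => θ (w ⟨(j * h + i.val) / l % h, Nat.mod_lt _ i.pos⟩) ((j * h + i.val) % l)

/-- Iterated cocycle `σ^{(k)}`, with `σ^{(1)} = σ` and
`σ^{(k+1)}(M, j₁·l + j₂) = σ^{(k)}(M, j₁) ∘ σ(~θ^k(M)_{j₁}, j₂)`. -/
def sigmaIter {X : Type*} {c : ℕ} (tilde : X → ℕ → X)
    (σ : X → ℕ → Equiv.Perm (Fin c)) (l : ℕ) : ℕ → X → ℕ → Equiv.Perm (Fin c)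
  | 0, _, _ => 1
  | k + 1, M, j =>
      sigmaIter tilde σ l k M (j / l) * σ (substIter tilde l k M (j / l)) (j % l)

/-- The group extension substitution `Θ̂(g, M)_j = (g ∘ σ(M,j), ~θ(M)_j)`. -/
def hatTheta {X : Type*} {c : ℕ} (tilde : X → ℕ → X)
    (σ : X → ℕ → Equiv.Perm (Fin c)) : Equiv.Perm (Fin c) × X → ℕ → Equiv.Perm (Fin c) × X :=
  fun p j => (p.1 * σ p.2 j, tilde p.2 j)

/-- The group `G` generated by the cocycle values `σ(M, j)`, `M ∈ 𝒳`, `j < l`. -/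
def cocycleGroup {X : Type*} {c : ℕ} (σ : X → ℕ → Equiv.Perm (Fin c)) (l : ℕ) :
    Subgroup (Equiv.Perm (Fin c)) :=
  Subgroup.closure { g | ∃ M : X, ∃ j, j < l ∧ g = σ M j }

namespace Aux

variable {A : Type*}

theorem substIter_succ {θ : A → ℕ → A} {l : ℕ} (k : ℕ) (a : A) (j : ℕ) :
    substIter θ l (k + 1) a j = θ (substIter θ l k a (j / l)) (j % l) := rfl

theorem substIter_add (θ : A → ℕ → A) (l : ℕ) (k1 k2 : ℕ) (a : A) (j : ℕ) :
    substIter θ l (k1 + k2) a j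
      = substIter θ l k2 (substIter θ l k1 a (j / l ^ k2)) (j % l ^ k2) := by
  induction k2 generalizing j with
  | zero => simp [substIter]
  | succ k ih =>
      have h1 : k1 + (k + 1) = (k1 + k) + 1 := rfl
      have e1 : j / l / l ^ k = j / l ^ (k + 1) := by
        rw [Nat.div_div_eq_div_mul, pow_succ']
      have e2 : j % l ^ (k + 1) / l = j / l % l ^ k := by
        rw [pow_succ', Nat.mod_mul_right_div_self]
      have e3 : j % l ^ (k + 1) % l = j % l := by
        rw [pow_succ']; exact Nat.mod_mod_of_dvd _ ⟨l ^ k, rfl⟩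
      rw [h1, substIter_succ, substIter_succ, ih, e1, e2, e3]

theorem substIter_stable {θ : A → ℕ → A} {l : ℕ} (hl : 2 ≤ l) {a₀ : A} (ha₀ : θ a₀ 0 = a₀) :
    ∀ k j, j < l ^ k → substIter θ l (k + 1) a₀ j = substIter θ l k a₀ j := by
  intro k
  induction k with
  | zero =>
      intro j hj
      simp only [pow_zero, Nat.lt_one_iff] at hj
      subst hj
      simp [substIter, ha₀]
  | succ k ih =>
      intro j hj
      rw [substIter_succ, substIter_succ]
      congr 1
      exact ih _ (Nat.div_lt_of_lt_mul (by rwa [← pow_succ']))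

theorem substIter_ge {θ : A → ℕ → A} {l : ℕ} (hl : 2 ≤ l) {a₀ : A} (ha₀ : θ a₀ 0 = a₀)
    {k j : ℕ} (hj : j < l ^ k) :
    ∀ K, k ≤ K → substIter θ l K a₀ j = substIter θ l k a₀ j := by
  intro K hK
  induction K with
  | zero =>
      have : k = 0 := Nat.le_zero.mp hK
      subst this; rfl
  | succ K ih =>
      rcases Nat.lt_or_ge k (K + 1) with h | h
      · have hk : k ≤ K := by omega
        have hjK : j < l ^ K := lt_of_lt_of_le hj (Nat.pow_le_pow_right (by omega) hk)
        rw [substIter_stable hl ha₀ K j hjK, ih hk]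
      · have : k = K + 1 := le_antisymm hK h
        subst this; rfl

theorem u_eq {θ : A → ℕ → A} {l : ℕ} (hl : 2 ≤ l) {a₀ : A} (ha₀ : θ a₀ 0 = a₀)
    {k n : ℕ} (hn : n < l ^ k) :
    substFixedPoint θ l a₀ n = substIter θ l k a₀ n := by
  have h2 : n < l ^ (n + 1) := by
    calc n < 2 ^ n := Nat.lt_two_pow_self
    _ ≤ 2 ^ (n + 1) := Nat.pow_le_pow_right (by omega) (by omega)
    _ ≤ l ^ (n + 1) := Nat.pow_le_pow_left hl _
  rcases le_total k (n + 1) with h | h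
  · exact (substIter_ge hl ha₀ hn (n + 1) h)
  · exact ((substIter_ge hl ha₀ h2 k h).symm)

theorem u_zero {θ : A → ℕ → A} {l : ℕ} (hl : 2 ≤ l) {a₀ : A} (ha₀ : θ a₀ 0 = a₀) :
    substFixedPoint θ l a₀ 0 = a₀ := by
  have : substFixedPoint θ l a₀ 0 = substIter θ l 0 a₀ 0 :=
    u_eq hl ha₀ (by simp)
  simpa [substIter] using this

theorem u_substIter {θ : A → ℕ → A} {l : ℕ} (hl : 2 ≤ l) {a₀ : A} (ha₀ : θ a₀ 0 = a₀)
    (k n : ℕ) {j : ℕ} (hj : j < l ^ k) :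
    substFixedPoint θ l a₀ (n * l ^ k + j) = substIter θ l k (substFixedPoint θ l a₀ n) j := by
  have hn : n < l ^ n.succ := by
    calc n < 2 ^ n := Nat.lt_two_pow_self
    _ ≤ 2 ^ (n + 1) := Nat.pow_le_pow_right (by omega) (by omega)
    _ ≤ l ^ (n + 1) := Nat.pow_le_pow_left hl _
  have hbig : n * l ^ k + j < l ^ (n.succ + k) := by
    have h1 : n * l ^ k + j < (n + 1) * l ^ k := by
      rw [add_mul, one_mul]; omega
    calc n * l ^ k + j < (n + 1) * l ^ k := h1
    _ ≤ l ^ n.succ * l ^ k := Nat.mul_le_mul_right _ hn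
    _ = l ^ (n.succ + k) := (pow_add l n.succ k).symm
  rw [u_eq hl ha₀ hbig, substIter_add, u_eq hl ha₀ hn]
  have hL : 0 < l ^ k := Nat.pow_pos (by omega)
  congr 2
  · rw [mul_comm, Nat.mul_add_div hL, Nat.div_eq_of_lt hj, add_zero]
  · rw [mul_comm, Nat.mul_add_mod, Nat.mod_eq_of_lt hj]

end Aux
namespace Aux

variable {A : Type*} {θ : A → ℕ → A} {l : ℕ} {a₀ : A}

/-- Every letter occurs in the fixed point. -/
theorem letter_occurs (hl : 2 ≤ l) (hθ : SubstPrimitive θ l) (ha₀ : θ a₀ 0 = a₀) (b : A) :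
    ∃ n, substFixedPoint θ l a₀ n = b := by
  obtain ⟨k₀, hk₀, hprim⟩ := hθ
  obtain ⟨j, hj, hjb⟩ := hprim a₀ b
  exact ⟨j, by rw [u_eq hl ha₀ hj, hjb]⟩

theorem height_mem (hl : 2 ≤ l) (hθ : SubstPrimitive θ l) (ha₀ : θ a₀ 0 = a₀) :
    substHeight θ l a₀ ∈ { m : ℕ | 1 ≤ m ∧ Nat.Coprime m l ∧
      ∀ r : ℕ, 1 ≤ r → substFixedPoint θ l a₀ r = substFixedPoint θ l a₀ 0 → m ∣ r } := by
  have hret : ∃ r, 1 ≤ r ∧ substFixedPoint θ l a₀ r = substFixedPoint θ l a₀ 0 := by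
    obtain ⟨k₀, hk₀, hprim⟩ := hθ
    obtain ⟨j, hj, hjb⟩ := hprim (substFixedPoint θ l a₀ 1) a₀
    refine ⟨1 * l ^ k₀ + j, ?_, ?_⟩
    · have : 1 ≤ l ^ k₀ := Nat.one_le_pow _ _ (by omega)
      omega
    · rw [u_substIter hl ha₀ k₀ 1 hj, hjb, u_zero hl ha₀]
  obtain ⟨r, hr1, hrret⟩ := hret
  apply Nat.sSup_mem
  · exact ⟨1, le_refl 1, Nat.coprime_one_left l, fun r _ _ => one_dvd r⟩
  · exact ⟨r, fun m hm => Nat.le_of_dvd hr1 (hm.2.2 r hr1 hrret)⟩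

theorem height_pos (hl : 2 ≤ l) (hθ : SubstPrimitive θ l) (ha₀ : θ a₀ 0 = a₀) :
    1 ≤ substHeight θ l a₀ := (height_mem hl hθ ha₀).1

theorem height_coprime (hl : 2 ≤ l) (hθ : SubstPrimitive θ l) (ha₀ : θ a₀ 0 = a₀) :
    Nat.Coprime (substHeight θ l a₀) l := (height_mem hl hθ ha₀).2.1

/-- The height divides every (possibly zero) occurrence time of `a₀`. -/
theorem height_dvd_occ (hl : 2 ≤ l) (hθ : SubstPrimitive θ l) (ha₀ : θ a₀ 0 = a₀)
    {r : ℕ} (hr : substFixedPoint θ l a₀ r = a₀) : substHeight θ l a₀ ∣ r := by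
  rcases Nat.eq_zero_or_pos r with h | h
  · simp [h]
  · exact (height_mem hl hθ ha₀).2.2 r h (by rw [hr, u_zero hl ha₀])

/-- The letter of the fixed point determines the position modulo the height. -/
theorem u_congr_mod (hl : 2 ≤ l) (hθ : SubstPrimitive θ l) (ha₀ : θ a₀ 0 = a₀)
    {n m : ℕ} (hnm : substFixedPoint θ l a₀ n = substFixedPoint θ l a₀ m) :
    ((n : ZMod (substHeight θ l a₀)) = (m : ZMod (substHeight θ l a₀))) := by
  set h := substHeight θ l a₀ with hh
  obtain ⟨k₀, hk₀, hprim⟩ := hθ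
  obtain ⟨p, hp, hpa⟩ := hprim (substFixedPoint θ l a₀ n) a₀
  have h1 : substFixedPoint θ l a₀ (n * l ^ k₀ + p) = a₀ := by
    rw [u_substIter hl ha₀ k₀ n hp, hpa]
  have h2 : substFixedPoint θ l a₀ (m * l ^ k₀ + p) = a₀ := by
    rw [u_substIter hl ha₀ k₀ m hp, ← hnm, hpa]
  have d1 : h ∣ n * l ^ k₀ + p := height_dvd_occ hl ⟨k₀, hk₀, hprim⟩ ha₀ h1
  have d2 : h ∣ m * l ^ k₀ + p := height_dvd_occ hl ⟨k₀, hk₀, hprim⟩ ha₀ h2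
  have z1 : ((n * l ^ k₀ + p : ℕ) : ZMod h) = 0 := (ZMod.natCast_eq_zero_iff _ _).mpr d1
  have z2 : ((m * l ^ k₀ + p : ℕ) : ZMod h) = 0 := (ZMod.natCast_eq_zero_iff _ _).mpr d2
  push_cast at z1 z2
  have hul : IsUnit ((l : ZMod h) ^ k₀) := by
    refine IsUnit.pow _ ?_
    rw [ZMod.isUnit_iff_coprime]
    exact (height_coprime hl ⟨k₀, hk₀, hprim⟩ ha₀).symm
  have : (n : ZMod h) * (l : ZMod h) ^ k₀ = (m : ZMod h) * (l : ZMod h) ^ k₀ := by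
    have := z1.trans z2.symm
    linear_combination this
  obtain ⟨c, hc⟩ := hul
  calc (n : ZMod h) = (n : ZMod h) * (c * c⁻¹) := by rw [Units.mul_inv, mul_one]
  _ = (m : ZMod h) * (c * c⁻¹) := by
      rw [← mul_assoc, ← mul_assoc]
      congr 1
      rw [hc] at *
      push_cast
      rw [this]
  _ = (m : ZMod h) := by rw [Units.mul_inv, mul_one]

end Aux
namespace Aux

variable {A : Type*} {θ : A → ℕ → A} {l : ℕ} {a₀ : A}

theorem pi_col (hl : 2 ≤ l) (ha₀ : θ a₀ 0 = a₀) (hθ : SubstPrimitive θ l)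
    {π : A → ZMod (substHeight θ l a₀)}
    (hπ : ∀ n, π (substFixedPoint θ l a₀ n) = n)
    {k j : ℕ} (hj : j < l ^ k) (a : A) :
    π (substIter θ l k a j) = π a * (l : ZMod (substHeight θ l a₀)) ^ k + j := by
  obtain ⟨n, hn⟩ := letter_occurs hl hθ ha₀ a
  rw [← hn, ← u_substIter hl ha₀ k n hj, hπ, hπ]
  push_cast
  ring

theorem exists_sync_column [Finite A] (hl : 2 ≤ l) (hθ : SubstPrimitive θ l)
    (ha₀ : θ a₀ 0 = a₀) (hch : columnNumber θ l = substHeight θ l a₀)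
    {π : A → ZMod (substHeight θ l a₀)}
    (hπ : ∀ n, π (substFixedPoint θ l a₀ n) = n) :
    ∃ k j, 1 ≤ k ∧ j < l ^ k ∧
      ∀ a b : A, π a = π b → substIter θ l k a j = substIter θ l k b j := by
  haveI : NeZero (substHeight θ l a₀) := ⟨by have := height_pos hl hθ ha₀; omega⟩
  have hmem : columnNumber θ l ∈ { n : ℕ | ∃ k, 1 ≤ k ∧ ∃ j, j < l ^ k ∧
      ((fun a => substIter θ l k a j) '' Set.univ).ncard = n } := by
    apply Nat.sInf_mem
    exact ⟨((fun a => substIter θ l 1 a 0) '' Set.univ).ncard, 1, le_refl 1, 0,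
      by simpa using (by omega : 0 < l), rfl⟩
  obtain ⟨k, hk, j, hj, hcard⟩ := hmem
  rw [hch] at hcard
  refine ⟨k, j, hk, hj, ?_⟩
  have hIfin : ((fun a => substIter θ l k a j) '' Set.univ).Finite := Set.toFinite _
  have hsurj : π '' ((fun a => substIter θ l k a j) '' Set.univ) = Set.univ := by
    apply Set.eq_univ_of_forall
    intro c
    have hul : IsUnit ((l : ZMod (substHeight θ l a₀)) ^ k) := by
      refine IsUnit.pow _ ?_
      rw [ZMod.isUnit_iff_coprime]
      exact (height_coprime hl hθ ha₀).symm
    obtain ⟨v, hv⟩ := hul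
    obtain ⟨n, hn⟩ := ZMod.natCast_zmod_surjective
      ((c - (j : ZMod (substHeight θ l a₀))) * ((v⁻¹ : (ZMod (substHeight θ l a₀))ˣ) :
        ZMod (substHeight θ l a₀)))
    refine ⟨substIter θ l k (substFixedPoint θ l a₀ n) j, ⟨_, Set.mem_univ _, rfl⟩, ?_⟩
    have hinv : ((v⁻¹ : (ZMod (substHeight θ l a₀))ˣ) : ZMod (substHeight θ l a₀)) *
        (l : ZMod (substHeight θ l a₀)) ^ k = 1 := by
      rw [← hv]; exact Units.inv_mul v
    rw [pi_col hl ha₀ hθ hπ hj, hπ, hn, mul_assoc, hinv, mul_one, sub_add_cancel]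
  have hinj : Set.InjOn π ((fun a => substIter θ l k a j) '' Set.univ) := by
    apply Set.injOn_of_ncard_image_eq _ hIfin
    rw [hsurj, hcard, Set.ncard_univ, Nat.card_zmod]
  intro a b hab
  apply hinj ⟨a, Set.mem_univ _, rfl⟩ ⟨b, Set.mem_univ _, rfl⟩
  simp only
  rw [pi_col hl ha₀ hθ hπ hj, pi_col hl ha₀ hθ hπ hj, hab]

end Aux
namespace Aux

open Classical in
/-- Positions `r < l^(m*k)` where the column of `θ^(m*k)` is NOT determined by `π`. -/
noncomputable def BadSet {A H : Type*} (θ : A → ℕ → A) (l : ℕ) (π : A → H) (k m : ℕ) :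
    Finset ℕ :=
  (Finset.range (l ^ (m * k))).filter
    (fun r => ¬ ∀ a b, π a = π b → substIter θ l (m * k) a r = substIter θ l (m * k) b r)

variable {A H : Type*} {θ : A → ℕ → A} {l : ℕ} {π : A → H}

theorem notMem_badSet_iff {k m r : ℕ} (hr : r < l ^ (m * k)) :
    r ∉ BadSet θ l π k m ↔
      ∀ a b, π a = π b → substIter θ l (m * k) a r = substIter θ l (m * k) b r := by
  classical
  simp [BadSet, Finset.mem_filter, hr]

theorem badSet_card (hl : 2 ≤ l) {k j : ℕ} (hj : j < l ^ k)
    (hsync : ∀ a b : A, π a = π b → substIter θ l k a j = substIter θ l k b j)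
    (hcol : ∀ (K q : ℕ), q < l ^ K → ∀ a b : A, π a = π b →
      π (substIter θ l K a q) = π (substIter θ l K b q)) :
    ∀ m, (BadSet θ l π k m).card ≤ (l ^ k - 1) ^ m := by
  classical
  have hLpos : 0 < l ^ k := Nat.pow_pos (by omega)
  intro m
  induction m with
  | zero =>
      calc (BadSet θ l π k 0).card ≤ (Finset.range (l ^ (0 * k))).card :=
            Finset.card_le_card (Finset.filter_subset _ _)
      _ = 1 := by norm_num
      _ = (l ^ k - 1) ^ 0 := by norm_num
  | succ m ih =>
      have hstep : (BadSet θ l π k (m + 1)).card ≤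
          ((BadSet θ l π k m) ×ˢ ((Finset.range (l ^ k)).erase j)).card := by
        apply Finset.card_le_card_of_injOn (fun r => (r / l ^ k, r % l ^ k))
        · intro r hr
          simp only [BadSet, Finset.mem_coe, Finset.mem_filter, Finset.mem_range] at hr
          obtain ⟨hrlt, hrbad⟩ := hr
          have hrlt' : r < l ^ (m * k + k) := by
            have : (m + 1) * k = m * k + k := by ring
            rwa [this] at hrlt
          have hdivlt : r / l ^ k < l ^ (m * k) := by
            apply Nat.div_lt_of_lt_mul
            rw [← pow_add, Nat.add_comm k (m * k)]
            exact hrlt'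
          rw [Finset.mem_coe, Finset.mem_product]
          constructor
          · simp only [BadSet, Finset.mem_filter, Finset.mem_range]
            refine ⟨hdivlt, ?_⟩
            intro hgood
            apply hrbad
            intro a b hab
            have e : (m + 1) * k = m * k + k := by ring
            rw [e, substIter_add, substIter_add]
            congr 1
            exact hgood a b hab
          · rw [Finset.mem_erase]
            constructor
            · intro hmod
              replace hmod : r % l ^ k = j := hmod
              apply hrbad
              intro a b hab
              have e : (m + 1) * k = m * k + k := by ring
              rw [e, substIter_add, substIter_add, hmod]
              apply hsync
              exact hcol (m * k) (r / l ^ k) hdivlt a b hab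
            · exact Finset.mem_range.mpr (Nat.mod_lt _ hLpos)
        · intro r1 h1 r2 h2 hz
          rw [Prod.mk.injEq] at hz
          obtain ⟨hz1, hz2⟩ := hz
          have e1 : r1 = l ^ k * (r1 / l ^ k) + r1 % l ^ k := (Nat.div_add_mod _ _).symm
          rw [e1, hz1, hz2, Nat.div_add_mod]
      calc (BadSet θ l π k (m + 1)).card ≤ _ := hstep
      _ = (BadSet θ l π k m).card * (l ^ k - 1) := by
          rw [Finset.card_product, Finset.card_erase_of_mem (Finset.mem_range.mpr hj),
            Finset.card_range]
      _ ≤ (l ^ k - 1) ^ m * (l ^ k - 1) := Nat.mul_le_mul_right _ ih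
      _ = (l ^ k - 1) ^ (m + 1) := (pow_succ _ _).symm

theorem exists_m_bad_small (hl : 2 ≤ l) {k j : ℕ} (hk : 1 ≤ k) (hj : j < l ^ k)
    (hsync : ∀ a b : A, π a = π b → substIter θ l k a j = substIter θ l k b j)
    (hcol : ∀ (K q : ℕ), q < l ^ K → ∀ a b : A, π a = π b →
      π (substIter θ l K a q) = π (substIter θ l K b q)) :
    ∀ δ : ℝ, 0 < δ → ∃ m, 1 ≤ m ∧ ((BadSet θ l π k m).card : ℝ) ≤ δ * (l ^ (m * k) : ℕ) := by
  intro δ hδ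
  have hLpos : 0 < l ^ k := Nat.pow_pos (by omega)
  set ρ : ℝ := ((l ^ k - 1 : ℕ) : ℝ) / ((l ^ k : ℕ) : ℝ) with hρ
  have hρ0 : 0 ≤ ρ := by positivity
  have hρ1 : ρ < 1 := by
    rw [hρ, div_lt_one (by positivity)]
    have : (1:ℝ) ≤ ((l ^ k : ℕ) : ℝ) := by exact_mod_cast hLpos
    have hcast : ((l ^ k - 1 : ℕ) : ℝ) = ((l ^ k : ℕ) : ℝ) - 1 := by
      have : 1 ≤ l ^ k := hLpos
      push_cast [this]
      ring
    rw [hcast]; linarith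
  have htend := tendsto_pow_atTop_nhds_zero_of_lt_one hρ0 hρ1
  have hev : ∀ᶠ m in atTop, ρ ^ m < δ := by
    have := htend.eventually (eventually_lt_nhds hδ) -- might not exist; fallback below
    exact this
  obtain ⟨m, hm⟩ := (hev.and (eventually_ge_atTop 1)).exists
  obtain ⟨hmlt, hm1⟩ := hm
  refine ⟨m, hm1, ?_⟩
  have hb := badSet_card hl hj hsync hcol m
  have hbase : ((l ^ k - 1 : ℕ) : ℝ) = ρ * ((l ^ k : ℕ) : ℝ) := by
    rw [hρ]
    field_simp
  calc ((BadSet θ l π k m).card : ℝ) ≤ (((l ^ k - 1) ^ m : ℕ) : ℝ) := by exact_mod_cast hb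
  _ = ((l ^ k - 1 : ℕ) : ℝ) ^ m := by push_cast; ring
  _ = ρ ^ m * ((l ^ k : ℕ) : ℝ) ^ m := by rw [hbase, mul_pow]
  _ ≤ δ * ((l ^ k : ℕ) : ℝ) ^ m := by
      apply mul_le_mul_of_nonneg_right (le_of_lt hmlt) (by positivity)
  _ = δ * ((l ^ (m * k) : ℕ) : ℝ) := by
      congr 1
      push_cast
      rw [← pow_mul, mul_comm k m]

end Aux
namespace Aux

variable {A : Type*} {θ : A → ℕ → A} {l : ℕ} {a₀ : A}

theorem block_in_u (hl : 2 ≤ l) (hθ : SubstPrimitive θ l) (ha₀ : θ a₀ 0 = a₀)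
    {x : ℤ → A} (hx : x ∈ subshift θ l) (n : ℕ) :
    ∃ c : ℕ, n ≤ c ∧ ∀ i : ℤ, i.natAbs ≤ n →
      x i = substFixedPoint θ l a₀ (((c : ℤ) + i).toNat) := by
  obtain ⟨k', hk', a, j, hjn, hblock⟩ := hx (-(n : ℤ)) (2 * n + 1)
  obtain ⟨k₀, hk₀, hprim⟩ := hθ
  obtain ⟨p, hp, hpa⟩ := hprim a₀ a
  have hup : substFixedPoint θ l a₀ p = a := by rw [u_eq hl ha₀ hp, hpa]
  refine ⟨p * l ^ k' + j + n, by omega, ?_⟩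
  intro i hi
  have hm : ((i + n).toNat) < 2 * n + 1 := by omega
  have hieq : i = -(n : ℤ) + ((i + n).toNat : ℤ) := by omega
  rw [hieq, hblock ((i + n).toNat) hm]
  have hjm : j + (i + n).toNat < l ^ k' := by omega
  have hidx : ((p * l ^ k' + j + n : ℕ) : ℤ) + (-(n : ℤ) + ((i + n).toNat : ℤ))
      = ((p * l ^ k' + (j + (i + n).toNat) : ℕ) : ℤ) := by push_cast; ring
  rw [hidx, Int.toNat_natCast, u_substIter hl ha₀ k' p hjm, hup]

theorem exists_periodic_match [Finite A] (hl : 2 ≤ l) (hθ : SubstPrimitive θ l)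
    (ha₀ : θ a₀ 0 = a₀)
    {π : A → ZMod (substHeight θ l a₀)} (hπ : ∀ n, π (substFixedPoint θ l a₀ n) = n)
    {x : ℤ → A} (hx : x ∈ subshift θ l) (k m : ℕ) :
    ∃ (z : ℤ → A) (T : ℕ),
      (∀ i : ℤ, z (i + ((substHeight θ l a₀ * l ^ (m * k) : ℕ) : ℤ)) = z i) ∧
      ∀ i : ℤ, (((T : ℤ) + i) % ((l ^ (m * k) : ℕ) : ℤ)).toNat ∉ BadSet θ l π k m →
        x i = z i := by
  classical
  haveI : NeZero (substHeight θ l a₀) := ⟨by have := height_pos hl hθ ha₀; omega⟩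
  set L : ℕ := l ^ (m * k) with hLdef
  have hLpos : 0 < L := Nat.pow_pos (by omega)
  set P : ℕ := substHeight θ l a₀ * L with hPdef
  have hPpos : 0 < P := Nat.mul_pos (height_pos hl hθ ha₀) hLpos
  have hLdvdP : L ∣ P := dvd_mul_left L _
  choose c hc1 hc2 using block_in_u hl hθ ha₀ hx
  obtain ⟨T, hT⟩ := Finite.exists_infinite_fiber
    (fun n : ℕ => (⟨c n % P, Nat.mod_lt _ hPpos⟩ : Fin P))
  have hfib : ∀ n₀ : ℕ, ∃ n, n₀ ≤ n ∧ c n % P = T.val := by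
    intro n₀
    have hinf : ((fun n : ℕ => (⟨c n % P, Nat.mod_lt _ hPpos⟩ : Fin P)) ⁻¹' {T}).Infinite :=
      Set.infinite_coe_iff.mp hT
    obtain ⟨b, hb, hlt⟩ := hinf.exists_gt n₀
    exact ⟨b, le_of_lt hlt, congrArg Fin.val hb⟩
  refine ⟨fun i : ℤ =>
      substIter θ l (m * k)
        (substFixedPoint θ l a₀
          ((((((T.val : ℤ) + i) % (P : ℤ)).toNat / L : ℕ) :
            ZMod (substHeight θ l a₀)).val))
        ((((T.val : ℤ) + i) % (P : ℤ)).toNat % L),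
    T.val, ?_, ?_⟩
  · intro i
    have key : ((T.val : ℤ) + (i + (P : ℤ))) % (P : ℤ) = ((T.val : ℤ) + i) % (P : ℤ) := by
      have e : (T.val : ℤ) + (i + (P : ℤ)) = ((T.val : ℤ) + i) + (P : ℤ) * 1 := by ring
      rw [e, Int.add_mul_emod_self_left]
    simp only [key]
  · intro i hgood
    obtain ⟨n, hn, hcT⟩ := hfib i.natAbs
    have hxi := hc2 n i hn
    have hνval : ((((c n : ℤ) + i).toNat : ℕ) : ℤ) = (c n : ℤ) + i :=
      Int.toNat_of_nonneg (by have := hc1 n; omega)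
    set ν : ℕ := ((c n : ℤ) + i).toNat with hνdef
    have hPz : (P : ℤ) ≠ 0 := by exact_mod_cast hPpos.ne'
    have hρval : (((((T.val : ℤ) + i) % (P : ℤ)).toNat : ℕ) : ℤ)
        = ((T.val : ℤ) + i) % (P : ℤ) :=
      Int.toNat_of_nonneg (Int.emod_nonneg _ hPz)
    set ρ : ℕ := (((T.val : ℤ) + i) % (P : ℤ)).toNat with hρdef
    -- ν ≡ ρ mod P
    have hcnT : c n ≡ T.val [MOD P] := by
      unfold Nat.ModEq
      rw [hcT, Nat.mod_eq_of_lt T.isLt]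
    have hmodZ : (ν : ℤ) ≡ (ρ : ℤ) [ZMOD (P : ℤ)] := by
      rw [hνval, hρval]
      have h1 : (c n : ℤ) ≡ (T.val : ℤ) [ZMOD (P : ℤ)] :=
        Int.modEq_iff_dvd.mpr (Nat.modEq_iff_dvd.mp hcnT)
      have h2 : ((T.val : ℤ) + i) ≡ ((T.val : ℤ) + i) % (P : ℤ) [ZMOD (P : ℤ)] :=
        (Int.emod_emod_of_dvd _ dvd_rfl : ((T.val : ℤ) + i) % (P:ℤ) % (P:ℤ) = _).symm
      exact (h1.add_right i).trans h2
    have hmodN : ν ≡ ρ [MOD P] := Nat.modEq_of_dvd hmodZ.dvd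
    have hveq : ν % L = ρ % L := (hmodN.of_dvd hLdvdP : Nat.ModEq L ν ρ)
    have hmodlt : ν % L < L := Nat.mod_lt _ hLpos
    -- transfer goodness
    have hgood' : ν % L ∉ BadSet θ l π k m := by
      have e : ((((T.val : ℤ) + i) % ((L : ℕ) : ℤ)).toNat) = ν % L := by
        have h1 : ((T.val : ℤ) + i) % ((L : ℕ) : ℤ) = (ρ : ℤ) % ((L : ℕ) : ℤ) := by
          rw [hρval, Int.emod_emod_of_dvd _ (Int.natCast_dvd_natCast.mpr hLdvdP)]
        rw [h1, ← Int.natCast_mod, Int.toNat_natCast, hveq]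
      rwa [e] at hgood
    have hgoodprop := (notMem_badSet_iff (show ν % L < l ^ (m * k) from hmodlt)).mp hgood'
    -- rewrite x i
    have hid : ν / L * L + ν % L = ν := by rw [mul_comm]; exact Nat.div_add_mod ν L
    have hu : x i = substIter θ l (m * k)
        (substFixedPoint θ l a₀ (ν / L)) (ν % L) := by
      calc x i = substFixedPoint θ l a₀ ν := hxi
      _ = substFixedPoint θ l a₀ (ν / L * L + ν % L) := by rw [hid]
      _ = substIter θ l (m * k) (substFixedPoint θ l a₀ (ν / L)) (ν % L) :=
          u_substIter hl ha₀ (m * k) (ν / L) hmodlt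
    -- ZMod equality of quotients
    have hcast : ((ν / L : ℕ) : ZMod (substHeight θ l a₀))
        = ((ρ / L : ℕ) : ZMod (substHeight θ l a₀)) := by
      rw [ZMod.natCast_eq_natCast_iff]
      apply Nat.modEq_of_dvd
      have hd : ((P : ℕ) : ℤ) ∣ (ρ : ℤ) - (ν : ℤ) := hmodN.dvd
      have e1 : (ν : ℤ) = (L : ℤ) * ((ν / L : ℕ) : ℤ) + ((ν % L : ℕ) : ℤ) := by
        exact_mod_cast (Nat.div_add_mod ν L).symm
      have e2 : (ρ : ℤ) = (L : ℤ) * ((ρ / L : ℕ) : ℤ) + ((ρ % L : ℕ) : ℤ) := by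
        exact_mod_cast (Nat.div_add_mod ρ L).symm
      have hdiff : (ρ : ℤ) - (ν : ℤ)
          = (L : ℤ) * (((ρ / L : ℕ) : ℤ) - ((ν / L : ℕ) : ℤ)) := by
        rw [e1, e2]
        have : ((ν % L : ℕ) : ℤ) = ((ρ % L : ℕ) : ℤ) := by exact_mod_cast hveq
        rw [this]; ring
      have hLz : ((L : ℕ) : ℤ) ≠ 0 := by exact_mod_cast hLpos.ne'
      obtain ⟨q, hq⟩ := hd
      refine ⟨q, ?_⟩
      apply mul_left_cancel₀ hLz
      rw [← hdiff, hq, hPdef]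
      push_cast
      ring
    rw [hu]
    show _ = substIter θ l (m * k)
        (substFixedPoint θ l a₀ (((ρ / L : ℕ) : ZMod (substHeight θ l a₀)).val)) (ρ % L)
    rw [← hveq]
    apply hgoodprop
    rw [hπ, hπ, hcast, ZMod.natCast_zmod_val]

end Aux
namespace Aux

variable {A : Type*} [TopologicalSpace A] [DiscreteTopology A] {θ : A → ℕ → A} {l : ℕ}

theorem subshift_closed : IsClosed (subshift θ l) := by
  have hrw : subshift θ l = ⋂ (i : ℤ), ⋂ (n : ℕ),
      ((fun (x : ℤ → A) (m : Fin n) => x (i + (m : ℤ))) ⁻¹'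
        {w : Fin n → A | ∃ k, 1 ≤ k ∧ ∃ a : A, ∃ j : ℕ, j + n ≤ l ^ k ∧
          ∀ m : Fin n, w m = substIter θ l k a (j + m)}) := by
    ext x
    simp only [Set.mem_iInter, Set.mem_preimage, Set.mem_setOf_eq, subshift]
    constructor
    · intro hx i n
      obtain ⟨k, hk, a, j, hj, hb⟩ := hx i n
      exact ⟨k, hk, a, j, hj, fun m => hb m m.isLt⟩
    · intro hx i n
      obtain ⟨k, hk, a, j, hj, hb⟩ := hx i n
      exact ⟨k, hk, a, j, hj, fun m hm => hb ⟨m, hm⟩⟩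
  rw [hrw]
  refine isClosed_iInter fun i => isClosed_iInter fun n => ?_
  exact IsClosed.preimage (continuous_pi fun m => continuous_apply _) (isClosed_discrete _)

theorem subshift_isCompact [Finite A] : IsCompact (subshift θ l) :=
  subshift_closed.isCompact

theorem cylinder_mem_nhds {p : ℤ → A} {U : Set (ℤ → A)} (hU : U ∈ nhds p) :
    ∃ R : ℕ, ∀ q : ℤ → A, (∀ i : ℤ, i.natAbs ≤ R → q i = p i) → q ∈ U := by
  rw [nhds_pi, Filter.mem_pi] at hU
  obtain ⟨I, hIfin, t, ht, hsub⟩ := hU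
  have hbd : ∃ R : ℕ, ∀ i ∈ I, i.natAbs ≤ R := by
    obtain ⟨R, hR⟩ := (hIfin.image Int.natAbs).bddAbove
    exact ⟨R, fun i hi => hR ⟨i, hi, rfl⟩⟩
  obtain ⟨R, hR⟩ := hbd
  refine ⟨R, fun q hq => hsub ?_⟩
  intro i hi
  rw [hq i (hR i hi)]
  exact mem_of_mem_nhds (ht i)

theorem uniform_cylinder [Finite A] {f : (ℤ → A) → ℂ} (hf : ContinuousOn f (subshift θ l))
    {ε : ℝ} (hε : 0 < ε) :
    ∃ R : ℕ, ∀ p ∈ subshift θ l, ∀ q ∈ subshift θ l,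
      (∀ i : ℤ, i.natAbs ≤ R → q i = p i) → ‖f q - f p‖ ≤ ε := by
  classical
  have hloc : ∀ p ∈ subshift θ l, ∃ R : ℕ, ∀ q ∈ subshift θ l,
      (∀ i : ℤ, i.natAbs ≤ R → q i = p i) → ‖f q - f p‖ < ε / 2 := by
    intro p hp
    have hcw := hf p hp
    have hball : {y : ℂ | ‖y - f p‖ < ε / 2} ∈ nhds (f p) := by
      have hb : Metric.ball (f p) (ε / 2) ∈ nhds (f p) := Metric.ball_mem_nhds _ (by linarith)
      have : Metric.ball (f p) (ε / 2) = {y : ℂ | ‖y - f p‖ < ε / 2} := by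
        ext y; simp [Metric.mem_ball, dist_eq_norm]
      rwa [this] at hb
    have hpre := hcw hball
    rw [Filter.mem_map, mem_nhdsWithin] at hpre
    obtain ⟨U, hUopen, hpU, hUsub⟩ := hpre
    obtain ⟨R, hRc⟩ := cylinder_mem_nhds (hUopen.mem_nhds hpU)
    exact ⟨R, fun q hq hagree => hUsub ⟨hRc q hagree, hq⟩⟩
  choose! Rp hRp using hloc
  have hopen : ∀ p ∈ subshift θ l,
      IsOpen {q : ℤ → A | ∀ i : ℤ, i.natAbs ≤ Rp p → q i = p i} := by
    intro p _
    have hset : {q : ℤ → A | ∀ i : ℤ, i.natAbs ≤ Rp p → q i = p i}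
        = Set.pi {i : ℤ | i.natAbs ≤ Rp p} (fun i => {p i}) := by
      ext q; simp [Set.mem_pi]
    rw [hset]
    apply isOpen_set_pi
    · apply Set.Finite.subset (Set.finite_Icc (-(Rp p : ℤ)) (Rp p))
      intro i hi
      simp only [Set.mem_setOf_eq] at hi
      simp only [Set.mem_Icc]
      omega
    · exact fun i _ => isOpen_discrete _
  have hcover : subshift θ l ⊆ ⋃ p ∈ subshift θ l,
      {q : ℤ → A | ∀ i : ℤ, i.natAbs ≤ Rp p → q i = p i} :=
    fun p hp => Set.mem_biUnion hp (fun i _ => rfl)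
  obtain ⟨S, hSsub, hSfin, hScover⟩ :=
    (subshift_isCompact (θ := θ) (l := l)).elim_finite_subcover_image hopen hcover
  have hbd : ∃ R : ℕ, ∀ p ∈ S, Rp p ≤ R := by
    obtain ⟨R, hR⟩ := (hSfin.image Rp).bddAbove
    exact ⟨R, fun p hp => hR ⟨p, hp, rfl⟩⟩
  obtain ⟨R, hR⟩ := hbd
  refine ⟨R, fun p hp q hq hagree => ?_⟩
  have hmem := hScover hp
  rw [Set.mem_iUnion₂] at hmem
  obtain ⟨p₀, hp₀S, hpmem⟩ := hmem
  have h1 : ‖f p - f p₀‖ < ε / 2 := hRp p₀ (hSsub hp₀S) p hp hpmem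
  have hqmem : ∀ i : ℤ, i.natAbs ≤ Rp p₀ → q i = p₀ i := by
    intro i hi
    rw [hagree i (le_trans hi (hR p₀ hp₀S)), hpmem i hi]
  have h2 : ‖f q - f p₀‖ < ε / 2 := hRp p₀ (hSsub hp₀S) q hq hqmem
  calc ‖f q - f p‖ = ‖(f q - f p₀) - (f p - f p₀)‖ := by ring_nf
  _ ≤ ‖f q - f p₀‖ + ‖f p - f p₀‖ := norm_sub_le _ _
  _ ≤ ε := by linarith

theorem shift_iterate (x : ℤ → A) (n : ℕ) (i : ℤ) : (shift^[n] x) i = x (i + n) := by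
  induction n generalizing x i with
  | zero => simp
  | succ n ih =>
      rw [Function.iterate_succ_apply, ih (shift x) i]
      show x (i + n + 1) = _
      congr 1
      push_cast
      ring

theorem shift_mem_subshift {x : ℤ → A} (hx : x ∈ subshift θ l) : shift x ∈ subshift θ l := by
  intro i n
  obtain ⟨k, hk, a, j, hj, hb⟩ := hx (i + 1) n
  refine ⟨k, hk, a, j, hj, fun m hm => ?_⟩
  show x (i + m + 1) = _
  rw [show i + (m : ℤ) + 1 = (i + 1) + m by ring]
  exact hb m hm

theorem iterate_shift_mem_subshift {x : ℤ → A} (hx : x ∈ subshift θ l) (n : ℕ) :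
    shift^[n] x ∈ subshift θ l := by
  induction n with
  | zero => exact hx
  | succ n ih => rw [Function.iterate_succ_apply']; exact shift_mem_subshift ih

end Aux
namespace Aux

theorem norm_sum_sub_sum_le {s t : Finset ℕ} (f : ℕ → ℂ) {C : ℝ}
    (hC : ∀ n, ‖f n‖ ≤ C) :
    ‖∑ n ∈ s, f n - ∑ n ∈ t, f n‖ ≤ C * (s \ t).card + C * (t \ s).card := by
  classical
  have h1 : ∑ n ∈ s \ t, f n + ∑ n ∈ s ∩ t, f n = ∑ n ∈ s, f n := by
    rw [← Finset.sdiff_inter_self_left s t]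
    exact Finset.sum_sdiff Finset.inter_subset_left
  have h2 : ∑ n ∈ t \ s, f n + ∑ n ∈ s ∩ t, f n = ∑ n ∈ t, f n := by
    rw [Finset.inter_comm, ← Finset.sdiff_inter_self_left t s]
    exact Finset.sum_sdiff Finset.inter_subset_left
  have hd : ∑ n ∈ s, f n - ∑ n ∈ t, f n = ∑ n ∈ s \ t, f n - ∑ n ∈ t \ s, f n := by
    rw [← h1, ← h2]; ring
  have hb : ∀ w : Finset ℕ, ‖∑ n ∈ w, f n‖ ≤ C * w.card := by
    intro w
    calc ‖∑ n ∈ w, f n‖ ≤ ∑ n ∈ w, ‖f n‖ := norm_sum_le _ _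
    _ ≤ ∑ _n ∈ w, C := Finset.sum_le_sum fun n _ => hC n
    _ = C * w.card := by rw [Finset.sum_const, nsmul_eq_mul, mul_comm]
  calc ‖∑ n ∈ s, f n - ∑ n ∈ t, f n‖
      = ‖∑ n ∈ s \ t, f n - ∑ n ∈ t \ s, f n‖ := by rw [hd]
  _ ≤ ‖∑ n ∈ s \ t, f n‖ + ‖∑ n ∈ t \ s, f n‖ := norm_sub_le _ _
  _ ≤ C * (s \ t).card + C * (t \ s).card := add_le_add (hb _) (hb _)

/-- Counting lemma: at most `N / L + 1` integers in `[1, N]` lie in a fixed residue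
class mod `L`. -/
theorem count_int_mod_le (N L : ℕ) (hL : 0 < L) (C : ℤ) (r : ℕ)
    [DecidablePred fun n : ℕ => ((C + (n : ℤ)) % (L : ℤ)).toNat = r] :
    ((Finset.Icc 1 N).filter (fun n : ℕ => ((C + (n : ℤ)) % (L : ℤ)).toNat = r)).card
      ≤ N / L + 1 := by
  have hcard : (Finset.range (N / L + 1)).card = N / L + 1 := Finset.card_range _
  rw [← hcard]
  apply Finset.card_le_card_of_injOn (fun n => n / L)
  · intro n hn
    simp only [Finset.mem_coe, Finset.mem_filter, Finset.mem_Icc] at hn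
    simp only [Finset.mem_coe, Finset.mem_range]
    have := Nat.div_le_div_right (c := L) hn.1.2
    omega
  · intro n1 h1 n2 h2 he
    have he' : n1 / L = n2 / L := he
    simp only [Finset.mem_coe, Finset.mem_filter, Finset.mem_Icc] at h1 h2
    have hLz : ((L : ℕ) : ℤ) ≠ 0 := by exact_mod_cast hL.ne'
    have e1 : (C + (n1 : ℤ)) % (L : ℤ) = (C + (n2 : ℤ)) % (L : ℤ) := by
      have p1 : 0 ≤ (C + (n1 : ℤ)) % (L : ℤ) := Int.emod_nonneg _ hLz
      have p2 : 0 ≤ (C + (n2 : ℤ)) % (L : ℤ) := Int.emod_nonneg _ hLz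
      have q1 := h1.2
      have q2 := h2.2
      omega
    have hdvd : ((L : ℕ) : ℤ) ∣ (n2 : ℤ) - (n1 : ℤ) := by
      have hm : (C + (n1 : ℤ)) ≡ (C + (n2 : ℤ)) [ZMOD (L : ℤ)] := e1
      have hd := Int.ModEq.dvd hm
      have e : C + (n2 : ℤ) - (C + (n1 : ℤ)) = (n2 : ℤ) - (n1 : ℤ) := by ring
      rwa [e] at hd
    have hmod : n1 % L = n2 % L := Nat.modEq_of_dvd hdvd
    have d1 : n1 = L * (n1 / L) + n1 % L := (Nat.div_add_mod _ _).symm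
    have d2 : n2 = L * (n2 / L) + n2 % L := (Nat.div_add_mod _ _).symm
    rw [d1, d2, he', hmod]

/-- A bounded periodic sequence is orthogonal to a bounded aperiodic sequence. -/
theorem periodic_mul_aperiodic {G : ℕ → ℂ} {P : ℕ} (hP : 1 ≤ P)
    (hper : ∀ n, G (n + P) = G n)
    {u : ℕ → ℂ} (hub : BoundedSeq u) (hua : AperiodicSeq u) :
    Filter.Tendsto (fun N : ℕ => (N : ℂ)⁻¹ * ∑ n ∈ Finset.Icc 1 N, G n * u n)
      Filter.atTop (nhds 0) := by
  classical
  obtain ⟨C, hC⟩ := hub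
  have hC0 : 0 ≤ C := le_trans (norm_nonneg _) (hC 0)
  have hper' : ∀ q r, G (r + P * q) = G r := by
    intro q
    induction q with
    | zero => simp
    | succ q ih =>
        intro r
        have e : r + P * (q + 1) = (r + P * q) + P := by ring
        rw [e, hper, ih]
  have hGmod : ∀ n, G n = G (n % P) := by
    intro n
    conv_lhs => rw [← Nat.div_add_mod n P]
    rw [Nat.add_comm]
    exact hper' (n / P) (n % P)
  set Q : ℕ → ℕ → Finset ℕ := fun b N =>
    (Finset.range (N + 1)).filter (fun q => 1 ≤ P * q + b ∧ P * q + b ≤ N) with hQ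
  have hkey : ∀ N, ∑ n ∈ Finset.Icc 1 N, G n * u n
      = ∑ b ∈ Finset.range P, G b * ∑ q ∈ Q b N, u (P * q + b) := by
    intro N
    have hmaps : ∀ n ∈ Finset.Icc 1 N, n % P ∈ Finset.range P :=
      fun n _ => Finset.mem_range.mpr (Nat.mod_lt _ (by omega))
    rw [← Finset.sum_fiberwise_of_maps_to hmaps (fun n => G n * u n)]
    apply Finset.sum_congr rfl
    intro b hb
    have hbP : b < P := Finset.mem_range.mp hb
    rw [Finset.mul_sum]
    apply Finset.sum_bij' (fun n _ => n / P) (fun q _ => P * q + b)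
    · intro n hn
      simp only [Finset.mem_filter, Finset.mem_Icc] at hn
      obtain ⟨⟨h1n, h2n⟩, h3n⟩ := hn
      have hid : P * (n / P) + b = n := by
        conv_rhs => rw [← Nat.div_add_mod n P]
        rw [h3n]
      have hd : n / P ≤ n := Nat.div_le_self _ _
      simp only [hQ, Finset.mem_filter, Finset.mem_range]
      exact ⟨by omega, by rw [hid]; omega, by rw [hid]; omega⟩
    · intro q hq
      simp only [hQ, Finset.mem_filter, Finset.mem_range] at hq
      simp only [Finset.mem_filter, Finset.mem_Icc]
      refine ⟨⟨hq.2.1, hq.2.2⟩, ?_⟩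
      rw [Nat.mul_add_mod, Nat.mod_eq_of_lt hbP]
    · intro n hn
      simp only [Finset.mem_filter, Finset.mem_Icc] at hn
      conv_rhs => rw [← Nat.div_add_mod n P]
      rw [hn.2]
    · intro q hq
      rw [Nat.mul_add_div (by omega), Nat.div_eq_of_lt hbP, add_zero]
    · intro n hn
      simp only [Finset.mem_filter, Finset.mem_Icc] at hn
      have hid : P * (n / P) + b = n := by
        conv_rhs => rw [← Nat.div_add_mod n P]
        rw [hn.2]
      rw [hGmod n, hn.2, hid]
  have hterm : ∀ b < P, Filter.Tendsto
      (fun N : ℕ => G b * ((N : ℂ)⁻¹ * ∑ q ∈ Q b N, u (P * q + b)))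
      Filter.atTop (nhds 0) := by
    intro b hbP
    have hzero : Filter.Tendsto
        (fun N : ℕ => (N : ℂ)⁻¹ * ∑ q ∈ Q b N, u (P * q + b)) Filter.atTop (nhds 0) := by
      set M : ℕ → ℕ := fun N => (N - b) / P with hM
      have hMtend : Filter.Tendsto M Filter.atTop Filter.atTop := by
        apply Filter.tendsto_atTop_atTop.mpr
        intro B
        refine ⟨P * B + b, fun N hN => ?_⟩
        show B ≤ (N - b) / P
        rw [Nat.le_div_iff_mul_le (by omega)]
        have e : B * P = P * B := by ring
        omega
      have hdiff1 : ∀ N : ℕ, (Q b N \ Finset.Icc 1 (M N)) ⊆ {0} := by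
        intro N q hq
        simp only [Finset.mem_sdiff, hQ, Finset.mem_filter, Finset.mem_range,
          Finset.mem_Icc, not_and, not_le] at hq
        obtain ⟨⟨hq1, hq2, hq3⟩, hq4⟩ := hq
        simp only [Finset.mem_singleton]
        by_contra hq0
        have hq1' : 1 ≤ q := by omega
        have hlt : M N < q := hq4 hq1'
        have hlt2 : N - b < q * P := (Nat.div_lt_iff_lt_mul (by omega)).mp hlt
        have hcomm : q * P = P * q := Nat.mul_comm q P
        omega
      have hdiff2 : ∀ N : ℕ, (Finset.Icc 1 (M N) \ Q b N) = ∅ := by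
        intro N
        rw [Finset.eq_empty_iff_forall_notMem]
        intro q hq
        simp only [Finset.mem_sdiff, Finset.mem_Icc, hQ, Finset.mem_filter,
          Finset.mem_range, not_and, not_le] at hq
        obtain ⟨⟨hq1, hq2⟩, hq3⟩ := hq
        have hq2' : q * P ≤ N - b := (Nat.le_div_iff_mul_le (by omega)).mp hq2
        have hcomm : q * P = P * q := Nat.mul_comm q P
        have hqq : q ≤ q * P := Nat.le_mul_of_pos_right q (by omega)
        have hqN : q < N + 1 := by omega
        have h1b : 1 ≤ P * q + b := by omega
        have := hq3 hqN h1b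
        omega
      have hclean := hua P b hP
      have hcomp : Filter.Tendsto
          (fun N : ℕ => ‖((M N : ℂ))⁻¹ * ∑ q ∈ Finset.Icc 1 (M N), u (P * q + b)‖)
          Filter.atTop (nhds 0) := by
        have h := tendsto_zero_iff_norm_tendsto_zero.mp (hclean.comp hMtend)
        simpa [Function.comp] using h
      rw [tendsto_zero_iff_norm_tendsto_zero]
      apply squeeze_zero' (Filter.Eventually.of_forall fun N => norm_nonneg _)
        (g := fun N : ℕ =>
          ‖((M N : ℂ))⁻¹ * ∑ q ∈ Finset.Icc 1 (M N), u (P * q + b)‖ + C / N)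
      · filter_upwards [Filter.eventually_ge_atTop 1,
          hMtend.eventually (Filter.eventually_ge_atTop 1)] with N hN1 hMN1
        have hNpos : (0 : ℝ) < N := by exact_mod_cast hN1
        have hMpos : (0 : ℝ) < (M N : ℝ) := by exact_mod_cast hMN1
        have hMleN : (M N : ℝ) ≤ (N : ℝ) := by
          have : M N ≤ N := le_trans (Nat.div_le_self _ _) (Nat.sub_le _ _)
          exact_mod_cast this
        have hdiff : ‖∑ q ∈ Q b N, u (P * q + b)
            - ∑ q ∈ Finset.Icc 1 (M N), u (P * q + b)‖ ≤ C := by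
          have hcard1 : ((Q b N \ Finset.Icc 1 (M N)).card : ℝ) ≤ 1 := by
            have := le_trans (Finset.card_le_card (hdiff1 N))
              (le_of_eq (Finset.card_singleton 0))
            exact_mod_cast this
          calc ‖∑ q ∈ Q b N, u (P * q + b) - ∑ q ∈ Finset.Icc 1 (M N), u (P * q + b)‖
              ≤ C * ((Q b N \ Finset.Icc 1 (M N)).card)
                + C * ((Finset.Icc 1 (M N) \ Q b N).card) :=
                norm_sum_sub_sum_le _ (fun n => hC _)
          _ ≤ C * 1 + C * 0 := by
              apply add_le_add
              · exact mul_le_mul_of_nonneg_left hcard1 hC0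
              · rw [hdiff2 N]; simp
          _ = C := by ring
        have htri : ‖∑ q ∈ Q b N, u (P * q + b)‖
            ≤ ‖∑ q ∈ Finset.Icc 1 (M N), u (P * q + b)‖ + C := by
          calc ‖∑ q ∈ Q b N, u (P * q + b)‖
              = ‖∑ q ∈ Finset.Icc 1 (M N), u (P * q + b)
                + (∑ q ∈ Q b N, u (P * q + b) - ∑ q ∈ Finset.Icc 1 (M N), u (P * q + b))‖ := by
                congr 1
                ring
          _ ≤ ‖∑ q ∈ Finset.Icc 1 (M N), u (P * q + b)‖
                + ‖∑ q ∈ Q b N, u (P * q + b) - ∑ q ∈ Finset.Icc 1 (M N), u (P * q + b)‖ :=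
                norm_add_le _ _
          _ ≤ _ := by linarith
        have hnorm : ‖((M N : ℂ))⁻¹ * ∑ q ∈ Finset.Icc 1 (M N), u (P * q + b)‖
            = ‖∑ q ∈ Finset.Icc 1 (M N), u (P * q + b)‖ / (M N : ℝ) := by
          rw [norm_mul, norm_inv, RCLike.norm_natCast]
          ring
        calc ‖(N : ℂ)⁻¹ * ∑ q ∈ Q b N, u (P * q + b)‖
            = ‖∑ q ∈ Q b N, u (P * q + b)‖ / (N : ℝ) := by
              rw [norm_mul, norm_inv, RCLike.norm_natCast]
              ring
        _ ≤ (‖∑ q ∈ Finset.Icc 1 (M N), u (P * q + b)‖ + C) / (N : ℝ) :=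
            (div_le_div_iff_of_pos_right hNpos).mpr htri
        _ = ‖∑ q ∈ Finset.Icc 1 (M N), u (P * q + b)‖ / (N : ℝ) + C / N := add_div _ _ _
        _ ≤ ‖((M N : ℂ))⁻¹ * ∑ q ∈ Finset.Icc 1 (M N), u (P * q + b)‖ + C / N := by
            rw [hnorm]
            apply add_le_add_left
            gcongr
      · have h1 : Filter.Tendsto (fun N : ℕ => C / (N : ℝ)) Filter.atTop (nhds 0) :=
          Filter.Tendsto.div_atTop tendsto_const_nhds tendsto_natCast_atTop_atTop
        simpa using hcomp.add h1
    simpa using (hzero.const_mul (G b))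
  have heq : (fun N : ℕ => (N : ℂ)⁻¹ * ∑ n ∈ Finset.Icc 1 N, G n * u n)
      = fun N : ℕ => ∑ b ∈ Finset.range P, G b * ((N : ℂ)⁻¹ * ∑ q ∈ Q b N, u (P * q + b)) := by
    funext N
    rw [hkey N, Finset.mul_sum]
    apply Finset.sum_congr rfl
    intro b _
    ring
  rw [heq]
  have h0 : (0 : ℂ) = ∑ _b ∈ Finset.range P, 0 := by simp
  rw [h0]
  apply tendsto_finset_sum
  intro b hb
  exact hterm b (Finset.mem_range.mp hb)

end Aux

set_option maxHeartbeats 2000000 in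
/-- If the column number of a primitive substitution equals its height,
then every automatic sequence `n ↦ f(S^n x)` in `(X_θ, S)` is orthogonal to every bounded,
aperiodic arithmetic function (no multiplicativity assumed). -/
theorem automatic_orthogonal_aperiodic_of_column_eq_height
    {A : Type*} [Finite A] [TopologicalSpace A] [DiscreteTopology A]
    (l : ℕ) (hl : 2 ≤ l) (θ : A → ℕ → A) (hθ : SubstPrimitive θ l)
    (a₀ : A) (ha₀ : θ a₀ 0 = a₀)
    (hch : columnNumber θ l = substHeight θ l a₀)
    (f : (ℤ → A) → ℂ) (hf : ContinuousOn f (subshift θ l))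
    (x : ℤ → A) (hx : x ∈ subshift θ l)
    (u : ℕ → ℂ) (hub : BoundedSeq u) (hua : AperiodicSeq u) :
    Tendsto (fun N : ℕ => (N : ℂ)⁻¹ * ∑ n ∈ Finset.Icc 1 N, f (shift^[n] x) * u n)
      atTop (nhds 0) := by
  classical
  obtain ⟨C, hC⟩ := hub
  have hC0 : 0 ≤ C := le_trans (norm_nonneg _) (hC 0)
  -- the projection π to ZMod h
  choose occ hocc using Aux.letter_occurs hl hθ ha₀
  set π : A → ZMod (substHeight θ l a₀) :=
    fun a => ((occ a : ℕ) : ZMod (substHeight θ l a₀)) with hπdef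
  have hπ : ∀ n, π (substFixedPoint θ l a₀ n) = (n : ZMod (substHeight θ l a₀)) := by
    intro n
    exact Aux.u_congr_mod hl hθ ha₀ (hocc (substFixedPoint θ l a₀ n))
  have hcolπ : ∀ (K q : ℕ), q < l ^ K → ∀ a b : A, π a = π b →
      π (substIter θ l K a q) = π (substIter θ l K b q) := by
    intro K q hq a b hab
    rw [Aux.pi_col hl ha₀ hθ hπ hq, Aux.pi_col hl ha₀ hθ hπ hq, hab]
  obtain ⟨k, j, hk, hj, hsync⟩ := Aux.exists_sync_column hl hθ ha₀ hch hπ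
  -- bound for f on the subshift
  obtain ⟨Mf, hMf⟩ := (Aux.subshift_isCompact (θ := θ) (l := l)).exists_bound_of_continuousOn hf
  have hMf0 : 0 ≤ Mf := le_trans (norm_nonneg _) (hMf x hx)
  rw [NormedAddCommGroup.tendsto_nhds_zero]
  intro ε hε
  -- choose cylinder radius R
  have hC1 : (0:ℝ) < C + 1 := by linarith
  set ε₁ : ℝ := ε / (4 * (C + 1)) with hε₁def
  have hε₁ : 0 < ε₁ := by positivity
  obtain ⟨R, hR⟩ := Aux.uniform_cylinder hf hε₁
  -- the cylinder approximation F of f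
  set trunc : (ℤ → A) → (ℤ → A) := fun q i => if i.natAbs ≤ R then q i else x i with htrunc
  set pickP : (ℤ → A) → (ℤ → A) := fun w =>
    if hw : ∃ p ∈ subshift θ l, ∀ i : ℤ, i.natAbs ≤ R → p i = w i then hw.choose else x
    with hpickP
  set F : (ℤ → A) → ℂ := fun q => f (pickP (trunc q)) with hF
  have pick_mem : ∀ w, pickP w ∈ subshift θ l := by
    intro w
    by_cases hw : ∃ p ∈ subshift θ l, ∀ i : ℤ, i.natAbs ≤ R → p i = w i
    · have he : pickP w = hw.choose := dif_pos hw
      rw [he]; exact hw.choose_spec.1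
    · have he : pickP w = x := dif_neg hw
      rw [he]; exact hx
  have F_bound : ∀ q, ‖F q‖ ≤ Mf := fun q => hMf _ (pick_mem _)
  have F_local : ∀ q q' : ℤ → A, (∀ i : ℤ, i.natAbs ≤ R → q i = q' i) → F q = F q' := by
    intro q q' hqq
    have : trunc q = trunc q' := by
      funext i
      rw [htrunc]
      by_cases hi : i.natAbs ≤ R
      · simp only [if_pos hi]; exact hqq i hi
      · simp only [if_neg hi]
    rw [hF]
    simp only [this]
  have F_close : ∀ q ∈ subshift θ l, ‖f q - F q‖ ≤ ε₁ := by
    intro q hq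
    have hex : ∃ p ∈ subshift θ l, ∀ i : ℤ, i.natAbs ≤ R → p i = trunc q i := by
      refine ⟨q, hq, fun i hi => ?_⟩
      rw [htrunc]
      simp only [if_pos hi]
    have hchoice : pickP (trunc q) = hex.choose := dif_pos hex
    have hmem := hex.choose_spec.1
    have hagr : ∀ i : ℤ, i.natAbs ≤ R → hex.choose i = q i := by
      intro i hi
      have := hex.choose_spec.2 i hi
      rw [this, htrunc]
      simp only [if_pos hi]
    have := hR q hq hex.choose hmem hagr
    rw [hF]
    simp only [hchoice]
    calc ‖f q - f hex.choose‖ = ‖f hex.choose - f q‖ := norm_sub_rev _ _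
    _ ≤ ε₁ := this
  -- choose m making the bad set small
  have hMf1 : (0:ℝ) < 2 * Mf + 1 := by linarith
  have hR1 : (0:ℝ) < 2 * (R:ℝ) + 1 := by positivity
  set δ : ℝ := ε / (4 * (2 * Mf + 1) * (C + 1) * (2 * (R:ℝ) + 1)) with hδdef
  have hδ : 0 < δ := by positivity
  obtain ⟨m, hm1, hB⟩ := Aux.exists_m_bad_small hl hk hj hsync hcolπ δ hδ
  set B : ℕ := (Aux.BadSet θ l π k m).card with hBdef
  set L : ℕ := l ^ (m * k) with hLdef
  have hLpos : 0 < L := Nat.pow_pos (by omega)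
  -- the periodic comparison sequence
  obtain ⟨z, T, hzper, hzmatch⟩ := Aux.exists_periodic_match hl hθ ha₀ hπ hx k m
  set P : ℕ := substHeight θ l a₀ * L with hPdef
  have hPpos : 1 ≤ P := Nat.one_le_iff_ne_zero.mpr
    (Nat.mul_ne_zero (by have := Aux.height_pos hl hθ ha₀; omega) hLpos.ne')
  set G : ℕ → ℂ := fun n => F (fun i : ℤ => z (i + (n : ℤ))) with hG
  have hGper : ∀ n, G (n + P) = G n := by
    intro n
    rw [hG]
    have he : (fun i : ℤ => z (i + ((n + P : ℕ) : ℤ))) = fun i : ℤ => z (i + (n : ℤ)) := by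
      funext i
      have e1 : i + ((n + P : ℕ) : ℤ) = (i + (n : ℤ)) + ((P : ℕ) : ℤ) := by push_cast; ring
      rw [e1]
      exact hzper (i + (n : ℤ))
    simp only [he]
  have hGbound : ∀ n, ‖G n‖ ≤ Mf := fun n => F_bound _
  -- goodness of a window
  set good : ℕ → Prop := fun n => ∀ i : ℤ, i.natAbs ≤ R →
      (((T : ℤ) + (i + (n : ℤ))) % ((L : ℕ) : ℤ)).toNat ∉ Aux.BadSet θ l π k m with hgood
  have hFG : ∀ n : ℕ, good n → F (shift^[n] x) = G n := by
    intro n hn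
    rw [hG]
    apply F_local
    intro i hi
    rw [Aux.shift_iterate]
    exact hzmatch (i + (n : ℤ)) (hn i hi)
  -- counting bad n's
  have hbadcount : ∀ N : ℕ,
      (((Finset.Icc 1 N).filter (fun n => ¬ good n)).card : ℝ)
        ≤ ((2 * (R:ℝ) + 1) * B) * ((N : ℝ) / L + 1) := by
    intro N
    have hsub : (Finset.Icc 1 N).filter (fun n => ¬ good n) ⊆
        (Finset.Icc (-(R:ℤ)) (R:ℤ) ×ˢ (Aux.BadSet θ l π k m)).biUnion
          (fun p => (Finset.Icc 1 N).filter
            (fun n : ℕ => ((((T : ℤ) + p.1) + (n : ℤ)) % ((L : ℕ) : ℤ)).toNat = p.2)) := by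
      intro n hn
      simp only [Finset.mem_filter, hgood, not_forall] at hn
      obtain ⟨hnI, i, hi, hibad⟩ := hn
      rw [not_not] at hibad
      rw [Finset.mem_biUnion]
      refine ⟨(i, (((T : ℤ) + (i + (n : ℤ))) % ((L : ℕ) : ℤ)).toNat), ?_, ?_⟩
      · rw [Finset.mem_product]
        exact ⟨by rw [Finset.mem_Icc]; omega, hibad⟩
      · rw [Finset.mem_filter]
        refine ⟨hnI, ?_⟩
        have e : ((T : ℤ) + i) + (n : ℤ) = (T : ℤ) + (i + (n : ℤ)) := by ring
        rw [e]
    have hle1 : ((Finset.Icc 1 N).filter (fun n => ¬ good n)).card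
        ≤ ((2 * R + 1) * B) * (N / L + 1) := by
      calc ((Finset.Icc 1 N).filter (fun n => ¬ good n)).card
          ≤ ((Finset.Icc (-(R:ℤ)) (R:ℤ) ×ˢ (Aux.BadSet θ l π k m)).biUnion
            (fun p => (Finset.Icc 1 N).filter
              (fun n : ℕ => ((((T : ℤ) + p.1) + (n : ℤ)) % ((L : ℕ) : ℤ)).toNat = p.2))).card :=
            Finset.card_le_card hsub
      _ ≤ ∑ p ∈ Finset.Icc (-(R:ℤ)) (R:ℤ) ×ˢ (Aux.BadSet θ l π k m),
            ((Finset.Icc 1 N).filter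
              (fun n : ℕ => ((((T : ℤ) + p.1) + (n : ℤ)) % ((L : ℕ) : ℤ)).toNat = p.2)).card :=
            Finset.card_biUnion_le
      _ ≤ ∑ _p ∈ Finset.Icc (-(R:ℤ)) (R:ℤ) ×ˢ (Aux.BadSet θ l π k m), (N / L + 1) :=
            Finset.sum_le_sum (fun p _ => Aux.count_int_mod_le N L hLpos ((T : ℤ) + p.1) p.2)
      _ = ((Finset.Icc (-(R:ℤ)) (R:ℤ)).card * B) * (N / L + 1) := by
            rw [Finset.sum_const, Finset.card_product, smul_eq_mul]
      _ = ((2 * R + 1) * B) * (N / L + 1) := by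
            congr 2
            rw [Int.card_Icc]
            omega
    calc (((Finset.Icc 1 N).filter (fun n => ¬ good n)).card : ℝ)
        ≤ (((2 * R + 1) * B) * (N / L + 1) : ℕ) := by exact_mod_cast hle1
    _ = ((2 * (R:ℝ) + 1) * B) * (((N / L : ℕ) : ℝ) + 1) := by push_cast; ring
    _ ≤ ((2 * (R:ℝ) + 1) * B) * ((N : ℝ) / L + 1) := by
        apply mul_le_mul_of_nonneg_left _ (by positivity)
        have := Nat.cast_div_le (m := N) (n := L) (α := ℝ)
        linarith
  -- the three sums
  have hsplit : ∀ N : ℕ, ∑ n ∈ Finset.Icc 1 N, f (shift^[n] x) * u n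
      = (∑ n ∈ Finset.Icc 1 N, (f (shift^[n] x) - F (shift^[n] x)) * u n)
        + ((∑ n ∈ Finset.Icc 1 N, (F (shift^[n] x) - G n) * u n)
          + ∑ n ∈ Finset.Icc 1 N, G n * u n) := by
    intro N
    rw [← Finset.sum_add_distrib, ← Finset.sum_add_distrib]
    apply Finset.sum_congr rfl
    intro n _
    ring
  -- bounds
  have hS1 : ∀ N : ℕ, ‖∑ n ∈ Finset.Icc 1 N, (f (shift^[n] x) - F (shift^[n] x)) * u n‖
      ≤ (N : ℝ) * (ε₁ * C) := by
    intro N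
    calc ‖∑ n ∈ Finset.Icc 1 N, (f (shift^[n] x) - F (shift^[n] x)) * u n‖
        ≤ ∑ n ∈ Finset.Icc 1 N, ‖(f (shift^[n] x) - F (shift^[n] x)) * u n‖ :=
          norm_sum_le _ _
    _ ≤ ∑ _n ∈ Finset.Icc 1 N, ε₁ * C := by
        apply Finset.sum_le_sum
        intro n _
        rw [norm_mul]
        exact mul_le_mul (F_close _ (Aux.iterate_shift_mem_subshift hx n)) (hC n)
          (norm_nonneg _) (le_of_lt hε₁)
    _ = (N : ℝ) * (ε₁ * C) := by
        rw [Finset.sum_const, Nat.card_Icc, nsmul_eq_mul]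
        simp
  have hS2 : ∀ N : ℕ, ‖∑ n ∈ Finset.Icc 1 N, (F (shift^[n] x) - G n) * u n‖
      ≤ (((Finset.Icc 1 N).filter (fun n => ¬ good n)).card : ℝ) * (2 * Mf * C) := by
    intro N
    calc ‖∑ n ∈ Finset.Icc 1 N, (F (shift^[n] x) - G n) * u n‖
        ≤ ∑ n ∈ Finset.Icc 1 N, ‖(F (shift^[n] x) - G n) * u n‖ := norm_sum_le _ _
    _ ≤ ∑ n ∈ Finset.Icc 1 N, (if ¬ good n then 2 * Mf * C else 0) := by
        apply Finset.sum_le_sum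
        intro n _
        by_cases hn : good n
        · rw [if_neg (not_not_intro hn), hFG n hn]
          simp
        · rw [if_pos hn, norm_mul]
          calc ‖F (shift^[n] x) - G n‖ * ‖u n‖ ≤ (Mf + Mf) * C := by
                apply mul_le_mul _ (hC n) (norm_nonneg _) (by linarith)
                calc ‖F (shift^[n] x) - G n‖ ≤ ‖F (shift^[n] x)‖ + ‖G n‖ := norm_sub_le _ _
                _ ≤ Mf + Mf := add_le_add (F_bound _) (hGbound n)
          _ = 2 * Mf * C := by ring
    _ = (((Finset.Icc 1 N).filter (fun n => ¬ good n)).card : ℝ) * (2 * Mf * C) := by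
        rw [Finset.sum_ite, Finset.sum_const, Finset.sum_const_zero, add_zero, nsmul_eq_mul]
  -- the periodic part tends to zero
  have hS3 : Tendsto (fun N : ℕ => ‖(N : ℂ)⁻¹ * ∑ n ∈ Finset.Icc 1 N, G n * u n‖)
      atTop (nhds 0) := by
    rw [← tendsto_zero_iff_norm_tendsto_zero]
    exact Aux.periodic_mul_aperiodic hPpos hGper ⟨C, hC⟩ hua
  -- tail term
  have htail : Tendsto (fun N : ℕ => (2 * Mf * C) * ((2 * (R:ℝ) + 1) * B) / (N : ℝ))
      atTop (nhds 0) :=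
    Filter.Tendsto.div_atTop tendsto_const_nhds tendsto_natCast_atTop_atTop
  -- eventual bound
  have hε₁C : ε₁ * C ≤ ε / 4 := by
    have h1 : ε₁ * (C + 1) = ε / 4 := by
      rw [hε₁def]
      field_simp
    nlinarith [hε₁]
  have hterm2 : (2 * Mf * C) * ((2 * (R:ℝ) + 1) * ((B : ℝ) / L)) ≤ ε / 4 := by
    have hBL : (B : ℝ) / L ≤ δ := by
      rw [div_le_iff₀ (by exact_mod_cast hLpos)]
      calc (B : ℝ) ≤ δ * ((l ^ (m * k) : ℕ) : ℝ) := hB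
      _ = δ * (L : ℝ) := by rw [hLdef]
    have hδval : (4 * (2 * Mf + 1) * (C + 1) * (2 * (R:ℝ) + 1)) * δ = ε := by
      rw [hδdef]
      field_simp
    have h1 : 2 * Mf * C * ((2 * (R:ℝ) + 1) * ((B:ℝ)/L))
        ≤ 2 * Mf * C * ((2 * (R:ℝ) + 1) * δ) := by
      apply mul_le_mul_of_nonneg_left
        (mul_le_mul_of_nonneg_left hBL (le_of_lt hR1)) (by positivity)
    have h2 : 2 * Mf * C * ((2 * (R:ℝ) + 1) * δ)
        ≤ (2 * Mf + 1) * (C + 1) * ((2 * (R:ℝ) + 1) * δ) := by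
      apply mul_le_mul_of_nonneg_right _ (by positivity)
      nlinarith [hMf0, hC0]
    have h3 : (2 * Mf + 1) * (C + 1) * ((2 * (R:ℝ) + 1) * δ) = ε / 4 := by
      linear_combination hδval / 4
    linarith
  have hev3 : ∀ᶠ N : ℕ in atTop,
      ‖(N : ℂ)⁻¹ * ∑ n ∈ Finset.Icc 1 N, G n * u n‖ < ε / 8 :=
    hS3.eventually (eventually_lt_nhds (by linarith))
  have hev4 : ∀ᶠ N : ℕ in atTop,
      (2 * Mf * C) * ((2 * (R:ℝ) + 1) * B) / (N : ℝ) < ε / 8 :=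
    htail.eventually (eventually_lt_nhds (by linarith))
  filter_upwards [hev3, hev4, Filter.eventually_ge_atTop 1] with N h3 h4 hN1
  have hNpos : (0 : ℝ) < N := by exact_mod_cast hN1
  have hnormsplit : ‖(N : ℂ)⁻¹ * ∑ n ∈ Finset.Icc 1 N, f (shift^[n] x) * u n‖
      ≤ ‖∑ n ∈ Finset.Icc 1 N, (f (shift^[n] x) - F (shift^[n] x)) * u n‖ / N
        + ‖∑ n ∈ Finset.Icc 1 N, (F (shift^[n] x) - G n) * u n‖ / N
        + ‖(N : ℂ)⁻¹ * ∑ n ∈ Finset.Icc 1 N, G n * u n‖ := by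
    rw [hsplit N, mul_add, mul_add]
    calc ‖(N:ℂ)⁻¹ * ∑ n ∈ Finset.Icc 1 N, (f (shift^[n] x) - F (shift^[n] x)) * u n
        + ((N:ℂ)⁻¹ * ∑ n ∈ Finset.Icc 1 N, (F (shift^[n] x) - G n) * u n
          + (N:ℂ)⁻¹ * ∑ n ∈ Finset.Icc 1 N, G n * u n)‖
        ≤ ‖(N:ℂ)⁻¹ * ∑ n ∈ Finset.Icc 1 N, (f (shift^[n] x) - F (shift^[n] x)) * u n‖
          + (‖(N:ℂ)⁻¹ * ∑ n ∈ Finset.Icc 1 N, (F (shift^[n] x) - G n) * u n‖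
            + ‖(N:ℂ)⁻¹ * ∑ n ∈ Finset.Icc 1 N, G n * u n‖) :=
          le_trans (norm_add_le _ _) (by gcongr; exact norm_add_le _ _)
    _ = _ := by
        simp only [norm_mul, norm_inv, RCLike.norm_natCast]
        ring
  have hb1 : ‖∑ n ∈ Finset.Icc 1 N, (f (shift^[n] x) - F (shift^[n] x)) * u n‖ / N
      ≤ ε / 4 := by
    calc ‖∑ n ∈ Finset.Icc 1 N, (f (shift^[n] x) - F (shift^[n] x)) * u n‖ / N
        ≤ ((N : ℝ) * (ε₁ * C)) / N := (div_le_div_iff_of_pos_right hNpos).mpr (hS1 N)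
    _ = ε₁ * C := by field_simp
    _ ≤ ε / 4 := hε₁C
  have hb2 : ‖∑ n ∈ Finset.Icc 1 N, (F (shift^[n] x) - G n) * u n‖ / N
      ≤ ε / 4 + (2 * Mf * C) * ((2 * (R:ℝ) + 1) * B) / (N : ℝ) := by
    calc ‖∑ n ∈ Finset.Icc 1 N, (F (shift^[n] x) - G n) * u n‖ / N
        ≤ ((((Finset.Icc 1 N).filter (fun n => ¬ good n)).card : ℝ) * (2 * Mf * C)) / N :=
          (div_le_div_iff_of_pos_right hNpos).mpr (hS2 N)
    _ ≤ ((((2 * (R:ℝ) + 1) * B) * ((N : ℝ) / L + 1)) * (2 * Mf * C)) / N :=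
        (div_le_div_iff_of_pos_right hNpos).mpr
          (mul_le_mul_of_nonneg_right (hbadcount N) (by positivity))
    _ = (2 * Mf * C) * ((2 * (R:ℝ) + 1) * ((B : ℝ) / L))
          + (2 * Mf * C) * ((2 * (R:ℝ) + 1) * B) / (N : ℝ) := by
        field_simp
    _ ≤ ε / 4 + (2 * Mf * C) * ((2 * (R:ℝ) + 1) * B) / (N : ℝ) :=
        add_le_add_left hterm2 _
  calc ‖(N : ℂ)⁻¹ * ∑ n ∈ Finset.Icc 1 N, f (shift^[n] x) * u n‖
      ≤ ‖∑ n ∈ Finset.Icc 1 N, (f (shift^[n] x) - F (shift^[n] x)) * u n‖ / N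
        + ‖∑ n ∈ Finset.Icc 1 N, (F (shift^[n] x) - G n) * u n‖ / N
        + ‖(N : ℂ)⁻¹ * ∑ n ∈ Finset.Icc 1 N, G n * u n‖ := hnormsplit
  _ < ε / 4 + (ε / 4 + (2 * Mf * C) * ((2 * (R:ℝ) + 1) * B) / (N : ℝ)) + ε / 8 := by
      apply add_lt_add_of_le_of_lt (add_le_add hb1 hb2) h3
  _ < ε := by linarith
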